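/- Let x ≥ 1 be a large real number. Then Σ_{n≤x} φ(n)·{x/n} = (6/π² − 1/2)·x² + O(x log x), where {y} denotes the fractional part of y. -/

import Mathlib

set_option maxHeartbeats 1000000

open Filter Real Finset ArithmeticFunction

lemma divisors_eq_filter {m N : ℕ} (hm : m ∈ Finset.Icc 1 N) :
    m.divisors = (Finset.Icc 1 N).filter (· ∣ m) := by
  simp only [Finset.mem_Icc] at hm
  ext d
  simp only [Nat.mem_divisors, Finset.mem_filter, Finset.mem_Icc]
  constructor
  · rintro ⟨hd, hm0⟩
    exact ⟨⟨Nat.one_le_iff_ne_zero.mpr (fun h => by simp [h] at hd; omega),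
      le_trans (Nat.le_of_dvd (by omega) hd) hm.2⟩, hd⟩
  · rintro ⟨_, hd⟩
    exact ⟨hd, by omega⟩

lemma sum_divisors_swap (f : ℕ → ℝ) (N : ℕ) :
    ∑ m ∈ Finset.Icc 1 N, ∑ d ∈ m.divisors, f d
      = ∑ d ∈ Finset.Icc 1 N, (N / d : ℕ) * f d := by
  have : ∀ m ∈ Finset.Icc 1 N, ∑ d ∈ m.divisors, f d
      = ∑ d ∈ Finset.Icc 1 N, if d ∣ m then f d else 0 := by
    intro m hm
    rw [divisors_eq_filter hm, Finset.sum_filter]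
  rw [Finset.sum_congr rfl this, Finset.sum_comm]
  refine Finset.sum_congr rfl fun d hd => ?_
  rw [← Finset.sum_filter]
  have : ∀ m ∈ (Finset.Icc 1 N).filter (d ∣ ·), f d = f d := fun _ _ => rfl
  rw [Finset.sum_const]
  have hc : (Finset.Icc 1 N).filter (d ∣ ·) = (Finset.Ioc 0 N).filter (d ∣ ·) := by
    rw [← Finset.Icc_add_one_left_eq_Ioc, zero_add]
  rw [hc, Nat.Ioc_filter_dvd_card_eq_div, nsmul_eq_mul]

lemma sum_Icc_id_real (N : ℕ) : ∑ m ∈ Finset.Icc 1 N, (m : ℝ) = N * (N + 1) / 2 := by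
  induction N with
  | zero => simp
  | succ n ih =>
    rw [Finset.sum_Icc_succ_top (by omega), ih]
    push_cast; ring

lemma sylvester (N : ℕ) :
    ∑ n ∈ Finset.Icc 1 N, (Nat.totient n : ℝ) * (N / n : ℕ) = N * (N + 1) / 2 := by
  have := sum_divisors_swap (fun d => (Nat.totient d : ℝ)) N
  have h2 : ∀ m ∈ Finset.Icc 1 N, ∑ d ∈ m.divisors, (Nat.totient d : ℝ) = (m : ℝ) := by
    intro m hm
    rw [← Nat.cast_sum]
    exact congrArg Nat.cast (Nat.sum_totient m)
  rw [Finset.sum_congr rfl h2, sum_Icc_id_real] at this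
  rw [this]
  exact Finset.sum_congr rfl fun n _ => mul_comm _ _

lemma totient_inv_eq (n : ℕ) (hn : 0 < n) :
    (Nat.totient n : ℝ) / n = ∑ d ∈ n.divisors, (moebius d : ℝ) / d := by
  have key : ∀ m > 0, ∑ x ∈ m.divisorsAntidiagonal,
      (moebius x.1 : ℝ) * (x.2 : ℝ) = (Nat.totient m : ℝ) := by
    refine (sum_eq_iff_sum_mul_moebius_eq (f := fun m => (Nat.totient m : ℝ))
      (g := fun m => (m : ℝ))).mp ?_
    intro m hm
    rw [← Nat.cast_sum]
    exact congrArg Nat.cast (Nat.sum_totient m)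
  have h := key n hn
  rw [Nat.sum_divisorsAntidiagonal (fun a b => (moebius a : ℝ) * b)] at h
  rw [← h, Finset.sum_div]
  refine Finset.sum_congr rfl fun d hd => ?_
  obtain ⟨hdvd, hn0⟩ := Nat.mem_divisors.mp hd
  have hd0 : (d : ℝ) ≠ 0 := Nat.cast_ne_zero.mpr (fun h0 => by simp [h0] at hdvd; omega)
  rw [Nat.cast_div hdvd hd0]
  field_simp

lemma moebius_div_sq_abs_le (d : ℕ) :
    |(moebius d : ℝ) / (d : ℝ) ^ 2| ≤ 1 / (d : ℝ) ^ 2 := by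
  rcases eq_or_ne d 0 with rfl | hd
  · simp
  · rw [abs_div, abs_of_nonneg (by positivity : (0:ℝ) ≤ (d:ℝ)^2)]
    apply div_le_div_of_nonneg_right ?_ (by positivity)
    · have : |moebius d| ≤ 1 := abs_moebius_le_one
      calc |((moebius d : ℤ) : ℝ)| = (|moebius d| : ℤ) := by
            rw [Int.cast_abs]
        _ ≤ 1 := by exact_mod_cast this

lemma summable_moebius_div_sq :
    Summable (fun d : ℕ => (moebius d : ℝ) / (d : ℝ) ^ 2) := by
  refine Summable.of_abs ?_
  refine Summable.of_nonneg_of_le (fun d => abs_nonneg _) moebius_div_sq_abs_le ?_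
  exact Real.summable_one_div_nat_pow.mpr one_lt_two

lemma tsum_moebius_div_sq :
    ∑' d : ℕ, (moebius d : ℝ) / (d : ℝ) ^ 2 = 6 / Real.pi ^ 2 := by
  have hs : (1 : ℝ) < (2 : ℂ).re := by norm_num
  have h1 : LSeries (fun n => (moebius n : ℂ)) 2 = 6 / (Real.pi : ℂ) ^ 2 := by
    have hz := LSeries_zeta_mul_Lseries_moebius (s := 2) hs
    rw [LSeries_zeta_eq_riemannZeta hs, riemannZeta_two] at hz
    have hpi : ((Real.pi : ℂ)) ^ 2 ≠ 0 := by
      refine pow_ne_zero _ ?_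
      exact_mod_cast Real.pi_ne_zero
    rw [div_mul_eq_mul_div, div_eq_one_iff_eq (by simpa using hpi)] at hz
    rw [eq_div_iff hpi]
    linear_combination hz
  have h2 : (↑(∑' d : ℕ, (moebius d : ℝ) / (d : ℝ) ^ 2) : ℂ)
      = LSeries (fun n => (moebius n : ℂ)) 2 := by
    rw [Complex.ofReal_tsum]
    rw [LSeries]
    refine tsum_congr fun d => ?_
    rcases eq_or_ne d 0 with rfl | hd
    · simp [LSeries.term_zero]
    · rw [LSeries.term_of_ne_zero hd]
      push_cast
      rw [show ((2 : ℂ)) = ((2 : ℕ) : ℂ) by norm_num, Complex.cpow_natCast]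
  have := h2.trans h1
  exact_mod_cast this

lemma tail_sq_le (N : ℕ) : ∑' i : ℕ, (1 : ℝ) / ((i + (N + 1) : ℕ) : ℝ) ^ 2 ≤ 2 / (N + 1) := by
  have hsum : ∀ m : ℕ, ∑ i ∈ Finset.range m, (1 : ℝ) / ((i + (N + 1) : ℕ) : ℝ) ^ 2
      ≤ 2 / (N + 1) := by
    intro m
    have e1 : ∑ i ∈ Finset.range m, (1 : ℝ) / ((i + (N + 1) : ℕ) : ℝ) ^ 2
        = ∑ d ∈ Finset.Ico (N + 1) (N + 1 + m), (1 : ℝ) / (d : ℝ) ^ 2 := by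
      rw [Finset.sum_Ico_eq_sum_range]
      simp only [Nat.add_sub_cancel_left]
      exact Finset.sum_congr rfl fun i _ => by rw [Nat.add_comm (N+1) i]
    rw [e1, Finset.Ico_add_one_left_eq_Ioo]
    have := sum_Ioo_inv_sq_le (α := ℝ) N (N + 1 + m)
    calc ∑ d ∈ Finset.Ioo N (N + 1 + m), (1:ℝ) / (d:ℝ) ^ 2
        = ∑ d ∈ Finset.Ioo N (N + 1 + m), ((d:ℝ) ^ 2)⁻¹ := by
          exact Finset.sum_congr rfl fun d _ => one_div _
      _ ≤ 2 / (N + 1) := by exact_mod_cast this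
  exact Real.tsum_le_of_sum_range_le (fun i => by positivity) hsum

lemma moebius_partial_tail (N : ℕ) (hN : 1 ≤ N) :
    |∑ d ∈ Finset.Icc 1 N, (moebius d : ℝ) / (d : ℝ) ^ 2
        - ∑' d : ℕ, (moebius d : ℝ) / (d : ℝ) ^ 2| ≤ 2 / N := by
  set f : ℕ → ℝ := fun d => (moebius d : ℝ) / (d : ℝ) ^ 2 with hf
  have h0 : ∑ d ∈ Finset.Icc 1 N, f d = ∑ d ∈ Finset.range (N + 1), f d := by
    refine Finset.sum_subset ?_ ?_
    · intro d hd
      simp only [Finset.mem_Icc] at hd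
      simp only [Finset.mem_range]
      omega
    · intro d hd1 hd2
      simp only [Finset.mem_range] at hd1
      simp only [Finset.mem_Icc, not_and, not_le] at hd2
      have : d = 0 := by omega
      simp [this, hf]
  have hsum := summable_moebius_div_sq
  have hkey := hsum.sum_add_tsum_nat_add (N + 1)
  rw [h0]
  have : ∑ d ∈ Finset.range (N + 1), f d - ∑' d, f d = -(∑' i : ℕ, f (i + (N + 1))) := by
    rw [← hkey]; ring
  rw [this, abs_neg]
  have hshift : Summable (fun i : ℕ => f (i + (N + 1))) :=
    (summable_nat_add_iff (N + 1)).mpr hsum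
  have habs : Summable (fun i : ℕ => |f (i + (N + 1))|) := hshift.abs
  have hps : Summable (fun i : ℕ => (1 : ℝ) / ((i + (N + 1) : ℕ) : ℝ) ^ 2) := by
    exact (summable_nat_add_iff (N + 1)).mpr (Real.summable_one_div_nat_pow.mpr one_lt_two)
  calc |∑' i : ℕ, f (i + (N + 1))| ≤ ∑' i : ℕ, |f (i + (N + 1))| := by
        have := norm_tsum_le_tsum_norm (f := fun i : ℕ => f (i + (N + 1)))
          (by simpa only [Real.norm_eq_abs] using habs)
        simpa only [Real.norm_eq_abs] using this
    _ ≤ ∑' i : ℕ, (1 : ℝ) / ((i + (N + 1) : ℕ) : ℝ) ^ 2 :=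
        Summable.tsum_le_tsum (fun i => moebius_div_sq_abs_le (i + (N + 1))) habs hps
    _ ≤ 2 / (N + 1) := tail_sq_le N
    _ ≤ 2 / N := by
        apply div_le_div_of_nonneg_left (by norm_num)
          (by exact_mod_cast hN) (by push_cast; linarith)

lemma moebius_div_abs_le (d : ℕ) :
    |(moebius d : ℝ) / (d : ℝ)| ≤ 1 / (d : ℝ) := by
  rcases eq_or_ne d 0 with rfl | hd
  · simp
  · rw [abs_div, abs_of_nonneg (by positivity : (0:ℝ) ≤ (d:ℝ))]
    apply div_le_div_of_nonneg_right ?_ (by positivity)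
    have : |moebius d| ≤ 1 := abs_moebius_le_one
    calc |((moebius d : ℤ) : ℝ)| = (|moebius d| : ℤ) := by rw [Int.cast_abs]
      _ ≤ 1 := by exact_mod_cast this

lemma floor_div_eq (y : ℝ) (hy : 0 ≤ y) (n : ℕ) :
    ((⌊y⌋₊ / n : ℕ) : ℝ) = y / n - Int.fract (y / n) := by
  have h0 : (0:ℝ) ≤ y / n := by positivity
  rw [Int.fract]
  rw [← natCast_floor_eq_intCast_floor h0, Nat.floor_div_natCast]
  ring

lemma harmonic_sum_le (N : ℕ) :
    ∑ d ∈ Finset.Icc 1 N, (1 : ℝ) / d ≤ 1 + Real.log N := by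
  have h := harmonic_le_one_add_log N
  have he : ((harmonic N : ℚ) : ℝ) = ∑ d ∈ Finset.Icc 1 N, (1 : ℝ) / d := by
    rw [harmonic_eq_sum_Icc]
    push_cast
    exact Finset.sum_congr rfl fun d _ => (one_div _).symm
  linarith [he ▸ h]

set_option maxHeartbeats 1000000 in
theorem sum_totient_fract :
    (fun x : ℝ =>
        (∑ n ∈ Finset.Icc 1 ⌊x⌋₊, (Nat.totient n : ℝ) * Int.fract (x / n)) -
          (6 / Real.pi ^ 2 - 1 / 2) * x ^ 2) =O[atTop]
      (fun x : ℝ => x * Real.log x) := by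
  rw [Asymptotics.isBigO_iff]
  refine ⟨10, ?_⟩
  filter_upwards [eventually_ge_atTop (2 : ℝ)] with x hx
  set K : ℝ := 6 / Real.pi ^ 2 with hKdef
  set N : ℕ := ⌊x⌋₊ with hNdef
  have hx0 : (0:ℝ) < x := by linarith
  have hN1 : 1 ≤ N := Nat.le_floor (by exact_mod_cast (by linarith : (1:ℝ) ≤ x))
  have hNx : (N : ℝ) ≤ x := Nat.floor_le (by linarith)
  have hxN : x < N + 1 := Nat.lt_floor_add_one x
  have hNpos : (0:ℝ) < N := by exact_mod_cast hN1
  -- constants for K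
  have hpi : (3:ℝ) ≤ Real.pi := by linarith [Real.pi_gt_three]
  have hK0 : 0 ≤ K := by positivity
  have hK1 : K ≤ 1 := by
    rw [hKdef, div_le_one (by positivity)]
    nlinarith
  -- rewrite fract
  have hfr : ∀ n ∈ Finset.Icc 1 N, (Nat.totient n : ℝ) * Int.fract (x / n)
      = (Nat.totient n : ℝ) * (x / n) - (Nat.totient n : ℝ) * ((N / n : ℕ) : ℝ) := by
    intro n hn
    have h1 : ((N / n : ℕ) : ℝ) = x / n - Int.fract (x / n) := floor_div_eq x (by linarith) n
    rw [h1]; ring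
  rw [Finset.sum_congr rfl hfr, Finset.sum_sub_distrib, sylvester N]
  -- main sum
  have hA1 : ∑ n ∈ Finset.Icc 1 N, (Nat.totient n : ℝ) * (x / n)
      = x * ∑ n ∈ Finset.Icc 1 N, (Nat.totient n : ℝ) / n := by
    rw [Finset.mul_sum]
    exact Finset.sum_congr rfl fun n _ => by ring
  have hA2 : ∑ n ∈ Finset.Icc 1 N, (Nat.totient n : ℝ) / n
      = ∑ d ∈ Finset.Icc 1 N, ((N / d : ℕ) : ℝ) * ((moebius d : ℝ) / d) := by
    rw [← sum_divisors_swap (fun d => (moebius d : ℝ) / d) N]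
    refine Finset.sum_congr rfl fun n hn => ?_
    exact totient_inv_eq n (by simp only [Finset.mem_Icc] at hn; omega)
  set P : ℝ := ∑ d ∈ Finset.Icc 1 N, (moebius d : ℝ) / (d : ℝ) ^ 2 with hPdef
  set R : ℝ := ∑ d ∈ Finset.Icc 1 N, Int.fract ((N : ℝ) / d) * ((moebius d : ℝ) / d)
    with hRdef
  have hA3 : ∑ d ∈ Finset.Icc 1 N, ((N / d : ℕ) : ℝ) * ((moebius d : ℝ) / d)
      = (N : ℝ) * P - R := by
    have : ∀ d ∈ Finset.Icc 1 N, ((N / d : ℕ) : ℝ) * ((moebius d : ℝ) / d)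
        = (N : ℝ) * ((moebius d : ℝ) / (d : ℝ) ^ 2)
          - Int.fract ((N : ℝ) / d) * ((moebius d : ℝ) / d) := by
      intro d hd
      have hd1 : 1 ≤ d := by simp only [Finset.mem_Icc] at hd; omega
      have hd0 : (d:ℝ) ≠ 0 := by positivity
      have h1 : ((N / d : ℕ) : ℝ) = (N:ℝ) / d - Int.fract ((N:ℝ) / d) := by
        have := floor_div_eq (N : ℝ) (by positivity) d
        rwa [Nat.floor_natCast] at this
      rw [h1]
      field_simp
    rw [Finset.sum_congr rfl this, Finset.sum_sub_distrib, ← Finset.mul_sum]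
  -- bounds
  have hP : |P - K| ≤ 2 / N := by
    rw [hPdef, hKdef, ← tsum_moebius_div_sq]
    exact moebius_partial_tail N hN1
  have hR : |R| ≤ 1 + Real.log x := by
    have h1 : |R| ≤ ∑ d ∈ Finset.Icc 1 N, (1:ℝ) / d := by
      refine (Finset.abs_sum_le_sum_abs _ _).trans (Finset.sum_le_sum fun d hd => ?_)
      rw [abs_mul]
      calc |Int.fract ((N:ℝ)/d)| * |(moebius d : ℝ) / d|
          ≤ 1 * (1 / d) := by
            refine mul_le_mul ?_ (moebius_div_abs_le d) (abs_nonneg _) zero_le_one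
            rw [abs_of_nonneg (Int.fract_nonneg _)]
            exact (Int.fract_lt_one _).le
        _ = 1 / d := one_mul _
    refine h1.trans ((harmonic_sum_le N).trans ?_)
    have : Real.log N ≤ Real.log x := Real.log_le_log hNpos hNx
    linarith
  have hlog2 : (0.6931471803 : ℝ) < Real.log 2 := Real.log_two_gt_d9
  have hlogx : Real.log 2 ≤ Real.log x := Real.log_le_log (by norm_num) hx
  -- assemble
  rw [hA1, hA2, hA3]
  have hEbound : |(N:ℝ) * (P - K)| ≤ 2 := by
    rw [abs_mul, abs_of_nonneg (le_of_lt hNpos)]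
    calc (N:ℝ) * |P - K| ≤ (N:ℝ) * (2 / N) := by
          exact mul_le_mul_of_nonneg_left hP (le_of_lt hNpos)
      _ = 2 := by field_simp
  rw [Real.norm_eq_abs, Real.norm_eq_abs]
  have hgoal : x * ((N:ℝ) * P - R) - (N:ℝ) * ((N:ℝ) + 1) / 2 - (K - 1/2) * x ^ 2
      = K * x * ((N:ℝ) - x) + x * ((N:ℝ) * (P - K)) - x * R
        + (x^2 - (N:ℝ) * ((N:ℝ) + 1)) / 2 := by ring
  rw [hgoal]
  obtain ⟨hE1, hE2⟩ := abs_le.mp hEbound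
  obtain ⟨hR1, hR2⟩ := abs_le.mp hR
  have c1 : |K * x * ((N:ℝ) - x)| ≤ x := by
    rw [abs_mul, abs_of_nonneg (by positivity : (0:ℝ) ≤ K * x)]
    have h1 : |(N:ℝ) - x| ≤ 1 := by rw [abs_le]; constructor <;> linarith
    calc K * x * |(N:ℝ) - x| ≤ K * x * 1 :=
          mul_le_mul_of_nonneg_left h1 (by positivity)
      _ = K * x := mul_one _
      _ ≤ 1 * x := mul_le_mul_of_nonneg_right hK1 hx0.le
      _ = x := one_mul _
  have c2 : |x * ((N:ℝ) * (P - K))| ≤ 2 * x := by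
    rw [abs_mul, abs_of_nonneg hx0.le]
    calc x * |(N:ℝ) * (P - K)| ≤ x * 2 := mul_le_mul_of_nonneg_left hEbound hx0.le
      _ = 2 * x := mul_comm _ _
  have c3 : |x * R| ≤ x * (1 + Real.log x) := by
    rw [abs_mul, abs_of_nonneg hx0.le]
    exact mul_le_mul_of_nonneg_left hR hx0.le
  have c4 : |(x^2 - (N:ℝ) * ((N:ℝ) + 1)) / 2| ≤ 3 * x / 2 := by
    rw [abs_div, abs_of_nonneg (by norm_num : (0:ℝ) ≤ (2:ℝ))]
    have : |x^2 - (N:ℝ) * ((N:ℝ) + 1)| ≤ 3 * x := by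
      rw [abs_le]; constructor <;> nlinarith
    linarith
  obtain ⟨d1, d1'⟩ := abs_le.mp c1
  obtain ⟨d2, d2'⟩ := abs_le.mp c2
  obtain ⟨d3, d3'⟩ := abs_le.mp c3
  obtain ⟨d4, d4'⟩ := abs_le.mp c4
  have hfin : |K * x * ((N:ℝ) - x) + x * ((N:ℝ) * (P - K)) - x * R
      + (x^2 - (N:ℝ) * ((N:ℝ) + 1)) / 2| ≤ 5.5 * x + x * Real.log x := by
    rw [abs_le]; constructor <;> linarith
  refine hfin.trans ?_
  have hxlog : 0 ≤ x * Real.log x := by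
    have : (0:ℝ) ≤ Real.log x := le_trans (by linarith) hlogx
    positivity
  rw [abs_of_nonneg hxlog]
  linarith [mul_le_mul_of_nonneg_left hlogx hx0.le, mul_lt_mul_of_pos_left hlog2 hx0]
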